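/- Let h be a minimal solution to a regular-ordered word equation E: α = β, and let S_p be any sequence of positions associated with h. Then S_p contains at most one position for each variable; that is, S_p does not contain two distinct entries (x,z,d) and (x,z',d') with the same variable x. -/

import Mathlib

/-!
Framework for quadratic word equations, positions, correspondence and the
sequences S_p of equivalent positions.  Constants `C`, variables `V`;
patterns are words over `C ⊕ V`.
-/

namespace WEq

variable {C V : Type}

/-- Apply a substitution (identity on constants) to a pattern. -/
def applySub (h : V → List C) : List (C ⊕ V) → List C
  | [] => []
  | Sum.inl a :: rest => a :: applySub h rest
  | Sum.inr x :: rest => h x ++ applySub h rest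

/-- The image of a single symbol under the substitution `h`. -/
def img (h : V → List C) : C ⊕ V → List C := Sum.elim (fun a => [a]) h

/-- A position `(x, z, d)`: the `d`-th letter (1-indexed) of the copy of `h(x)`
produced by the `z`-th occurrence (1-indexed) of the symbol `x` in αβ. -/
abbrev Pos (C V : Type) := (C ⊕ V) × ℕ × ℕ

/-- The equation α = β is quadratic: every variable occurs at most twice in αβ. -/
def Quadratic [DecidableEq C] [DecidableEq V] (α β : List (C ⊕ V)) : Prop :=
  ∀ x : V, (α ++ β).count (Sum.inr x) ≤ 2

/-- `s` is a constant symbol, or a variable occurring exactly once in αβ. -/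
def SingleOrConst [DecidableEq C] [DecidableEq V] (α β : List (C ⊕ V)) (s : C ⊕ V) : Prop :=
  (∃ a : C, s = Sum.inl a) ∨ (α ++ β).count s = 1

/-- `(x, z, d)` is a valid position w.r.t. the solution `h` of α = β. -/
def ValidPos [DecidableEq C] [DecidableEq V] (α β : List (C ⊕ V)) (h : V → List C)
    (p : Pos C V) : Prop :=
  1 ≤ p.2.1 ∧ p.2.1 ≤ (α ++ β).count p.1 ∧ 1 ≤ p.2.2 ∧ p.2.2 ≤ (img h p.1).length

/-- The `z`-th occurrence (1-indexed) of the symbol `s` in γ is at list index `j`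
(0-indexed). -/
def IsOcc [DecidableEq C] [DecidableEq V] (γ : List (C ⊕ V)) (s : C ⊕ V) (z j : ℕ) : Prop :=
  γ[j]? = some s ∧ (γ.take j).count s + 1 = z

/-- The offset, in the common solution word `h(α) = h(β)`, of the image of the
symbol occurrence at index `j` of αβ (indices `j < |α|` lie in α, the others in β). -/
def offset (h : V → List C) (α β : List (C ⊕ V)) (j : ℕ) : ℕ :=
  if j < α.length then (applySub h (α.take j)).length
  else (applySub h (β.take (j - α.length))).length

/-- Positions `p` and `q` correspond: one arises from an occurrence in α, the other
from an occurrence in β, and they produce the same letter-position of the common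
solution word `h(α) = h(β)`. -/
def Corresponds [DecidableEq C] [DecidableEq V] (α β : List (C ⊕ V)) (h : V → List C)
    (p q : Pos C V) : Prop :=
  ValidPos α β h p ∧ ValidPos α β h q ∧
  ∃ j j' : ℕ, IsOcc (α ++ β) p.1 p.2.1 j ∧ IsOcc (α ++ β) q.1 q.2.1 j' ∧
    ((j < α.length ∧ ¬ j' < α.length) ∨ (¬ j < α.length ∧ j' < α.length)) ∧
    offset h α β j + p.2.2 = offset h α β j' + q.2.2

open Classical in
/-- The (unique, when it exists) position corresponding to `q`. -/
noncomputable def nextCorr [DecidableEq C] [DecidableEq V] (α β : List (C ⊕ V))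
    (h : V → List C) (q : Pos C V) : Option (Pos C V) :=
  if hq : ∃! r : Pos C V, Corresponds α β h q r then some hq.choose else none

/-- The other occurrence index: `1 ↦ 2`, `2 ↦ 1`. -/
def flipz (z : ℕ) : ℕ := if z = 1 then 2 else 1

/-- The sequence S_p (as a partial function `ℕ → Option (Pos C V)`, 1-indexed after
the head `p` at index 0... here `seqS p 1 = p₁ = p`? We index so that
`seqS p 1 = p` is NOT used; instead `seqS p 0 = p = p₁` and `seqS p 1 = p₂`, etc.):
`p₁ = p`, `p₂` is the position corresponding to `p₁`; for `i ≥ 2`, if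
`p_i = (x, z, d)` with `x` a constant or a variable occurring only once the
sequence terminates (`none`), and otherwise `p_{i+1}` is the position
corresponding to `(x, z', d)` where `z' ≠ z` indexes the other occurrence of `x`. -/
noncomputable def seqS [DecidableEq C] [DecidableEq V] (α β : List (C ⊕ V))
    (h : V → List C) (p : Pos C V) : ℕ → Option (Pos C V)
  | 0 => some p
  | 1 => nextCorr α β h p
  | i + 2 =>
    match seqS α β h p (i + 1) with
    | none => none
    | some q =>
      match q.1 with
      | Sum.inl _ => none
      | Sum.inr x =>
        if (α ++ β).count (Sum.inr x : C ⊕ V) = 2 then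
          nextCorr α β h (q.1, flipz q.2.1, q.2.2)
        else none

/-- Regular equation: each variable occurs at most once in each side. -/
def Regular [DecidableEq C] [DecidableEq V] (α β : List (C ⊕ V)) : Prop :=
  ∀ x : V, α.count (Sum.inr x) ≤ 1 ∧ β.count (Sum.inr x) ≤ 1

/-- Regular-ordered equation: regular, and any two variables occurring on both
sides occur in the same relative order in α as in β. -/
def RegularOrdered [DecidableEq C] [DecidableEq V] (α β : List (C ⊕ V)) : Prop :=
  Regular α β ∧
  ∀ x y : V, Sum.inr x ∈ α → Sum.inr x ∈ β → Sum.inr y ∈ α → Sum.inr y ∈ β →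
    (α.idxOf (Sum.inr x) < α.idxOf (Sum.inr y) ↔
      β.idxOf (Sum.inr x) < β.idxOf (Sum.inr y))

end WEq

set_option linter.unusedSectionVars false
namespace WEq

variable {C V : Type} [DecidableEq C] [DecidableEq V]

instance sumLawfulBEq : LawfulBEq (C ⊕ V) where
  eq_of_beq {a b} h := by
    cases a <;> cases b
    · exact congrArg Sum.inl (eq_of_beq h)
    · exact Bool.noConfusion h
    · exact Bool.noConfusion h
    · exact congrArg Sum.inr (eq_of_beq h)
  rfl {a} := by
    cases a
    · exact (beq_self_eq_true (α := C) _ : _)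
    · exact (beq_self_eq_true (α := V) _ : _)

theorem applySub_append (h : V → List C) (u v : List (C ⊕ V)) :
    applySub h (u ++ v) = applySub h u ++ applySub h v := by
  induction u with
  | nil => rfl
  | cons a t ih => cases a <;> simp [applySub, ih]

theorem applySub_singleton (h : V → List C) (s : C ⊕ V) :
    applySub h [s] = img h s := by
  cases s <;> simp [applySub, img]

theorem applySub_take_succ (h : V → List C) (γ : List (C ⊕ V)) (n : ℕ) (hn : n < γ.length) :
    applySub h (γ.take (n+1)) = applySub h (γ.take n) ++ img h γ[n] := by
  rw [List.take_succ, applySub_append]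
  congr 1
  rw [List.getElem?_eq_getElem hn]
  simp [applySub_singleton]

theorem applySub_take_le (h : V → List C) (γ : List (C ⊕ V)) {n m : ℕ} (hnm : n ≤ m) :
    (applySub h (γ.take n)).length ≤ (applySub h (γ.take m)).length := by
  obtain ⟨t, rfl⟩ := Nat.exists_eq_add_of_le hnm
  rw [List.take_add, applySub_append]
  simp

theorem block_le (h : V → List C) (γ : List (C ⊕ V)) {n m : ℕ} (hnm : n < m)
    (hn : n < γ.length) :
    (applySub h (γ.take n)).length + (img h γ[n]).length ≤ (applySub h (γ.take m)).length := by
  have h1 := applySub_take_le h γ (show n+1 ≤ m by omega)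
  rw [applySub_take_succ h γ n hn] at h1
  simpa using h1

theorem count_take_succ_eq {γ : List (C ⊕ V)} {s : C ⊕ V} {j : ℕ} (hj : j < γ.length)
    (hs : γ[j] = s) :
    (γ.take (j+1)).count s = (γ.take j).count s + 1 := by
  rw [List.take_succ, List.getElem?_eq_getElem hj, hs]
  simp [List.count_append, List.count_cons]

theorem count_take_le {γ : List (C ⊕ V)} {s : C ⊕ V} {n m : ℕ} (hnm : n ≤ m) :
    (γ.take n).count s ≤ (γ.take m).count s := by
  obtain ⟨t, rfl⟩ := Nat.exists_eq_add_of_le hnm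
  rw [List.take_add, List.count_append]
  omega

theorem count_take_le_count {γ : List (C ⊕ V)} {s : C ⊕ V} (n : ℕ) :
    (γ.take n).count s ≤ γ.count s := by
  conv_rhs => rw [← List.take_append_drop n γ]
  rw [List.count_append]; omega

theorem isOcc_index {γ : List (C ⊕ V)} {s : C ⊕ V} {z j : ℕ} (h1 : IsOcc γ s z j) :
    ∃ (hj : j < γ.length), γ[j] = s := by
  obtain ⟨hg, -⟩ := h1
  rw [List.getElem?_eq_some_iff] at hg
  exact hg

theorem isOcc_unique {γ : List (C ⊕ V)} {s : C ⊕ V} {z j j' : ℕ}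
    (h1 : IsOcc γ s z j) (h2 : IsOcc γ s z j') : j = j' := by
  by_contra hne
  wlog hlt : j < j' generalizing j j'
  · exact this h2 h1 (Ne.symm hne) (by omega)
  obtain ⟨hj, hs⟩ := isOcc_index h1
  have k1 : (γ.take (j+1)).count s = (γ.take j).count s + 1 := count_take_succ_eq hj hs
  have k2 : (γ.take (j+1)).count s ≤ (γ.take j').count s := count_take_le (by omega)
  obtain ⟨-, hc1⟩ := h1
  obtain ⟨-, hc2⟩ := h2
  omega

theorem eq_of_count_le_one {γ : List (C ⊕ V)} {s : C ⊕ V} (hc : γ.count s ≤ 1)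
    {n m : ℕ} (hn : n < γ.length) (hm : m < γ.length) (h1 : γ[n] = s) (h2 : γ[m] = s) :
    n = m := by
  by_contra hne
  wlog hlt : n < m generalizing n m
  · exact this hm hn h2 h1 (Ne.symm hne) (by omega)
  have k1 : (γ.take (n+1)).count s = (γ.take n).count s + 1 := count_take_succ_eq hn h1
  have k2 : (γ.take (m+1)).count s = (γ.take m).count s + 1 := count_take_succ_eq hm h2
  have k3 : (γ.take (n+1)).count s ≤ (γ.take m).count s := count_take_le (by omega)
  have k4 : (γ.take (m+1)).count s ≤ γ.count s := count_take_le_count _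
  omega

theorem indexOf_eq_of_getElem {A : Type} [BEq A] [LawfulBEq A] {l : List A} {a : A} {n : ℕ}
    (hc : l.count a ≤ 1) (hn : n < l.length) (h1 : l[n] = a) : l.idxOf a = n := by
  induction l generalizing n with
  | nil => simp at hn
  | cons b t ih =>
    rw [List.idxOf_cons]
    cases n with
    | zero =>
      simp at h1
      simp [h1]
    | succ n =>
      simp only [List.length_cons, Nat.add_lt_add_iff_right] at hn
      simp only [List.getElem_cons_succ] at h1
      have hmem : a ∈ t := h1 ▸ List.getElem_mem hn
      have hba : (b == a) = false := by
        by_contra hb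
        have : b = a := by
          have := Bool.not_eq_false (b == a) ▸ hb
          exact eq_of_beq (by simpa using hb)
        subst this
        have : 1 ≤ t.count b := List.one_le_count_iff.2 hmem
        rw [List.count_cons_self] at hc
        omega
      rw [hba]
      simp only [cond_false]
      have hct : t.count a ≤ 1 := by
        rw [List.count_cons, hba] at hc
        simpa using hc
      rw [ih hct hn h1]

end WEq

namespace WEq

variable {C V : Type} [DecidableEq C] [DecidableEq V]

theorem getElem_left {α β : List (C ⊕ V)} {j : ℕ} (hj : j < α.length) :
    (α ++ β)[j]'(by rw [List.length_append]; omega) = α[j] :=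
  List.getElem_append_left _

theorem getElem_right {α β : List (C ⊕ V)} {j : ℕ} (hj : ¬ j < α.length)
    (hlen : j < (α ++ β).length) :
    (α ++ β)[j] = β[j - α.length]'(by rw [List.length_append] at hlen; omega) :=
  List.getElem_append_right (by omega)

theorem offset_left {α β : List (C ⊕ V)} (h : V → List C) {j : ℕ} (hj : j < α.length) :
    offset h α β j = (applySub h (α.take j)).length := if_pos hj

theorem offset_right {α β : List (C ⊕ V)} (h : V → List C) {j : ℕ} (hj : ¬ j < α.length) :
    offset h α β j = (applySub h (β.take (j - α.length))).length := if_neg hj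

/-- K1: blocks of two occurrences on the same side are disjoint and ordered. -/
theorem offset_block_le {α β : List (C ⊕ V)} (h : V → List C) {j j' : ℕ}
    (hj' : j' < (α ++ β).length) (hlt : j < j')
    (hside : j < α.length ↔ j' < α.length) :
    offset h α β j + (img h ((α ++ β)[j]'(by omega))).length ≤ offset h α β j' := by
  have hlen := hj'; rw [List.length_append] at hlen
  by_cases hA : j' < α.length
  · have hA' : j < α.length := hside.mpr hA
    rw [offset_left h hA', offset_left h hA, getElem_left hA']
    exact block_le h α hlt hA'
  · have hA' : ¬ j < α.length := fun hc => hA (hside.mp hc)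
    rw [offset_right h hA', offset_right h hA, getElem_right hA' (by omega)]
    exact block_le h β (by omega) (by omega)

/-- K2: a letter position of the word determines a unique block (on one side). -/
theorem cover_uniq {α β : List (C ⊕ V)} (h : V → List C) {j j' d d' : ℕ}
    (hj : j < (α ++ β).length) (hj' : j' < (α ++ β).length)
    (hside : j < α.length ↔ j' < α.length)
    (hd1 : 1 ≤ d) (hd2 : d ≤ (img h ((α ++ β)[j])).length)
    (hd1' : 1 ≤ d') (hd2' : d' ≤ (img h ((α ++ β)[j'])).length)
    (heq : offset h α β j + d = offset h α β j' + d') : j = j' := by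
  by_contra hne
  wlog hlt : j < j' generalizing j j' d d'
  · exact this hj' hj hside.symm hd1' hd2' hd1 hd2 heq.symm (Ne.symm hne) (by omega)
  have := offset_block_le h hj' hlt hside
  omega

/-- For a twice-occurring variable of a regular equation, occurrence 1 is in α
and occurrence 2 in β. -/
theorem z_side {α β : List (C ⊕ V)} {x : V} {z j : ℕ} (hreg : Regular α β)
    (hc2 : (α ++ β).count (Sum.inr x) = 2)
    (ho : IsOcc (α ++ β) (Sum.inr x) z j) : z = 1 ↔ j < α.length := by
  have hca : α.count (Sum.inr x) = 1 ∧ β.count (Sum.inr x) = 1 := by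
    rw [List.count_append] at hc2
    have := hreg x
    omega
  obtain ⟨hj, hval⟩ := isOcc_index ho
  obtain ⟨-, hz⟩ := ho
  have hlen := hj; rw [List.length_append] at hlen
  by_cases hA : j < α.length
  · have htake : (α ++ β).take j = α.take j :=
      List.take_append_of_le_length (by omega)
    have hαj : α[j] = Sum.inr x := by rw [← getElem_left hA]; exact hval
    have h1 : (α.take (j+1)).count (Sum.inr x) = (α.take j).count (Sum.inr x) + 1 :=
      count_take_succ_eq hA hαj
    have h2 : (α.take (j+1)).count (Sum.inr x) ≤ α.count (Sum.inr x) := count_take_le_count _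
    rw [htake] at hz
    simp only [hA, iff_true]
    omega
  · have htake : (α ++ β).take j = α ++ β.take (j - α.length) := by
      conv_lhs => rw [show j = α.length + (j - α.length) from by omega]
      rw [List.take_length_add_append]
    rw [htake, List.count_append] at hz
    simp only [hA, iff_false]
    omega

/-- Two occurrences of the same variable on the same side coincide. -/
theorem occ_same_side_unique {α β : List (C ⊕ V)} {x : V} {j j' : ℕ} (hreg : Regular α β)
    (hj : j < (α ++ β).length) (hj' : j' < (α ++ β).length)
    (g1 : (α ++ β)[j] = Sum.inr x) (g2 : (α ++ β)[j'] = Sum.inr x)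
    (hside : j < α.length ↔ j' < α.length) : j = j' := by
  have hlen := hj; rw [List.length_append] at hlen
  have hlen' := hj'; rw [List.length_append] at hlen'
  by_cases hA : j < α.length
  · have hA' := hside.mp hA
    refine eq_of_count_le_one (hreg x).1 hA hA' ?_ ?_
    · rw [← getElem_left hA]; exact g1
    · rw [← getElem_left hA']; exact g2
  · have hA' : ¬ j' < α.length := fun hc => hA (hside.mpr hc)
    have e1 : β[j - α.length]'(by omega) = Sum.inr x := by
      rw [← getElem_right hA hj]; exact g1
    have e2 : β[j' - α.length]'(by omega) = Sum.inr x := by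
      rw [← getElem_right hA' hj']; exact g2
    have := eq_of_count_le_one (hreg x).2 (show j - α.length < β.length by omega)
      (show j' - α.length < β.length by omega) e1 e2
    omega

/-- K3: order of two doubly-occurring variables is the same in α and β. -/
theorem occ_order_iff {α β : List (C ⊕ V)} (hro : RegularOrdered α β) {x y : V}
    {jxA jyA jxB jyB : ℕ}
    (hxA : jxA < α.length) (hyA : jyA < α.length)
    (hxB : jxB < (α ++ β).length) (hyB : jyB < (α ++ β).length)
    (hxB' : ¬ jxB < α.length) (hyB' : ¬ jyB < α.length)
    (gxA : α[jxA] = Sum.inr x) (gyA : α[jyA] = Sum.inr y)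
    (gxB : (α ++ β)[jxB] = Sum.inr x) (gyB : (α ++ β)[jyB] = Sum.inr y) :
    jxA < jyA ↔ jxB < jyB := by
  have hreg := hro.1
  have hlenx := hxB; rw [List.length_append] at hlenx
  have hleny := hyB; rw [List.length_append] at hleny
  have exB : β[jxB - α.length]'(by omega) = Sum.inr x := by
    rw [← getElem_right hxB' hxB]; exact gxB
  have eyB : β[jyB - α.length]'(by omega) = Sum.inr y := by
    rw [← getElem_right hyB' hyB]; exact gyB
  have memxA : Sum.inr x ∈ α := gxA ▸ List.getElem_mem hxA
  have memyA : Sum.inr y ∈ α := gyA ▸ List.getElem_mem hyA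
  have memxB : Sum.inr x ∈ β := exB ▸ List.getElem_mem (by omega)
  have memyB : Sum.inr y ∈ β := eyB ▸ List.getElem_mem (by omega)
  have ixA : α.idxOf (Sum.inr x) = jxA := indexOf_eq_of_getElem (hreg x).1 hxA gxA
  have iyA : α.idxOf (Sum.inr y) = jyA := indexOf_eq_of_getElem (hreg y).1 hyA gyA
  have ixB : β.idxOf (Sum.inr x) = jxB - α.length :=
    indexOf_eq_of_getElem (hreg x).2 (by omega) exB
  have iyB : β.idxOf (Sum.inr y) = jyB - α.length :=
    indexOf_eq_of_getElem (hreg y).2 (by omega) eyB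
  have := hro.2 x y memxA memxB memyA memyB
  rw [ixA, iyA, ixB, iyB] at this
  rw [this]
  omega

/-- K4: one chain step is strictly monotone in the letter position. -/
theorem step_mono {α β : List (C ⊕ V)} (hro : RegularOrdered α β) (h : V → List C)
    {x y : V} {jx jx' jy jy' dx dy : ℕ}
    (hjx : jx < (α ++ β).length) (hjx' : jx' < (α ++ β).length)
    (hjy : jy < (α ++ β).length) (hjy' : jy' < (α ++ β).length)
    (gx : (α ++ β)[jx] = Sum.inr x) (gx' : (α ++ β)[jx'] = Sum.inr x)
    (gy : (α ++ β)[jy] = Sum.inr y) (gy' : (α ++ β)[jy'] = Sum.inr y)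
    (sxy : jx < α.length ↔ jy < α.length)
    (sx : ¬ (jx' < α.length ↔ jx < α.length))
    (sy : ¬ (jy' < α.length ↔ jy < α.length))
    (hdx1 : 1 ≤ dx) (hdx2 : dx ≤ (h x).length)
    (hdy1 : 1 ≤ dy) (hdy2 : dy ≤ (h y).length)
    (hlt : offset h α β jx + dx < offset h α β jy + dy) :
    offset h α β jx' + dx < offset h α β jy' + dy := by
  have hreg := hro.1
  have himgx : (img h (Sum.inr x)).length = (h x).length := rfl
  have himgy : (img h (Sum.inr y)).length = (h y).length := rfl
  by_cases hxy : x = y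
  · subst hxy
    have e1 : jx = jy := occ_same_side_unique hreg hjx hjy gx gy sxy
    have e2 : jx' = jy' := occ_same_side_unique hreg hjx' hjy' gx' gy' (by tauto)
    subst e1; subst e2
    omega
  · have hne : jx ≠ jy := by
      intro hc
      subst hc
      rw [gx] at gy
      exact hxy (by injection gy)
    have hlt2 : jx < jy := by
      rcases Nat.lt_or_ge jx jy with h1 | h1
      · exact h1
      · exfalso
        have hlt3 : jy < jx := by omega
        have := offset_block_le h hjx hlt3 sxy.symm
        rw [gy, himgy] at this
        omega
    have hlt' : jx' < jy' := by
      by_cases hA : jx < α.length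
      · have hyA : jy < α.length := sxy.mp hA
        have gxA : α[jx] = Sum.inr x := by rw [← getElem_left hA]; exact gx
        have gyA : α[jy] = Sum.inr y := by rw [← getElem_left hyA]; exact gy
        have := occ_order_iff hro hA hyA hjx' hjy' (by tauto) (by tauto) gxA gyA gx' gy'
        exact this.mp hlt2
      · have hyA : ¬ jy < α.length := fun hc => hA (sxy.mpr hc)
        have hxA' : jx' < α.length := by tauto
        have hyA' : jy' < α.length := by tauto
        have gxA : α[jx'] = Sum.inr x := by rw [← getElem_left hxA']; exact gx'
        have gyA : α[jy'] = Sum.inr y := by rw [← getElem_left hyA']; exact gy'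
        have := occ_order_iff hro hxA' hyA' hjx hjy hA hyA gxA gyA gx gy
        exact this.mpr hlt2
    have hblk := offset_block_le h hjy' hlt' (by tauto)
    rw [gx', himgx] at hblk
    omega

end WEq

namespace WEq

variable {C V : Type} [DecidableEq C] [DecidableEq V]

theorem nextCorr_some {α β : List (C ⊕ V)} {h : V → List C} {q r : Pos C V}
    (hnc : nextCorr α β h q = some r) : Corresponds α β h q r := by
  unfold nextCorr at hnc
  split at hnc
  · next hq =>
    cases hnc
    exact hq.choose_spec.1
  · cases hnc

theorem seqS_zero {α β : List (C ⊕ V)} {h : V → List C} {p : Pos C V} :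
    seqS α β h p 0 = some p := rfl

theorem seqS_one {α β : List (C ⊕ V)} {h : V → List C} {p : Pos C V} :
    seqS α β h p 1 = nextCorr α β h p := rfl

theorem seqS_add_two {α β : List (C ⊕ V)} {h : V → List C} {p : Pos C V} (n : ℕ) :
    seqS α β h p (n+2) =
      match seqS α β h p (n + 1) with
      | none => none
      | some q =>
        match q.1 with
        | Sum.inl _ => none
        | Sum.inr x =>
          if (α ++ β).count (Sum.inr x : C ⊕ V) = 2 then
            nextCorr α β h (q.1, flipz q.2.1, q.2.2)
          else none := rfl

/-- unfolding of a successor step ≥ 2 -/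
theorem seqS_succ_elim {α β : List (C ⊕ V)} {h : V → List C} {p : Pos C V} {n : ℕ} {r : Pos C V}
    (hs : seqS α β h p (n+2) = some r) :
    ∃ q x, seqS α β h p (n+1) = some q ∧ q.1 = Sum.inr x ∧
      (α ++ β).count (Sum.inr x) = 2 ∧
      Corresponds α β h (q.1, flipz q.2.1, q.2.2) r := by
  rw [seqS_add_two] at hs
  rcases hq : seqS α β h p (n+1) with - | q
  · rw [hq] at hs; simp at hs
  · rw [hq] at hs
    obtain ⟨s, zq, dq⟩ := q
    cases s with
    | inl a => simp at hs
    | inr x =>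
      have hs' : (if (α ++ β).count (Sum.inr x : C ⊕ V) = 2 then
          nextCorr α β h (Sum.inr x, flipz zq, dq) else none) = some r := hs
      by_cases hc : (α ++ β).count (Sum.inr x : C ⊕ V) = 2
      · rw [if_pos hc] at hs'
        exact ⟨(Sum.inr x, zq, dq), x, rfl, rfl, hc, nextCorr_some hs'⟩
      · rw [if_neg hc] at hs'; cases hs'

theorem seqS_some_down {α β : List (C ⊕ V)} {h : V → List C} {p : Pos C V} {n : ℕ} {r : Pos C V}
    (hs : seqS α β h p (n+1) = some r) : ∃ q, seqS α β h p n = some q := by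
  cases n with
  | zero => exact ⟨p, rfl⟩
  | succ n =>
    obtain ⟨q, x, hq, -⟩ := seqS_succ_elim hs
    exact ⟨q, hq⟩

theorem seqS_some_mono {α β : List (C ⊕ V)} {h : V → List C} {p : Pos C V} {n m : ℕ}
    (hmn : m ≤ n) {r : Pos C V} (hs : seqS α β h p n = some r) :
    ∃ q, seqS α β h p m = some q := by
  induction n generalizing r with
  | zero => cases Nat.le_zero.mp hmn; exact ⟨r, hs⟩
  | succ n ih =>
    rcases Nat.lt_or_ge m (n+1) with hm | hm
    · obtain ⟨q, hq⟩ := seqS_some_down hs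
      exact ih (by omega) hq
    · have : m = n + 1 := by omega
      subst this; exact ⟨r, hs⟩

/-- Every chain entry of index ≥ 1 has an occurrence witness, is valid, and is
the second component of a correspondence. -/
theorem entry_occ {α β : List (C ⊕ V)} {h : V → List C} {p : Pos C V} {n : ℕ} {r : Pos C V}
    (hn : 1 ≤ n) (hs : seqS α β h p n = some r) :
    ∃ (jq jr : ℕ) (q : Pos C V), IsOcc (α ++ β) r.1 r.2.1 jr ∧ ValidPos α β h r ∧
      IsOcc (α ++ β) q.1 q.2.1 jq ∧ ValidPos α β h q ∧
      ((jq < α.length ∧ ¬ jr < α.length) ∨ (¬ jq < α.length ∧ jr < α.length)) ∧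
      offset h α β jq + q.2.2 = offset h α β jr + r.2.2 := by
  have hcorr : ∃ q : Pos C V, Corresponds α β h q r := by
    cases n with
    | zero => omega
    | succ n =>
      cases n with
      | zero => exact ⟨p, nextCorr_some hs⟩
      | succ n =>
        obtain ⟨q, x, -, -, -, hc⟩ := seqS_succ_elim hs
        exact ⟨_, hc⟩
  obtain ⟨q, hvq, hvr, jq, jr, oq, or_, hside, heq⟩ := hcorr
  exact ⟨jq, jr, q, or_, hvr, oq, hvq, hside, heq⟩

end WEq

namespace WEq

variable {C V : Type} [DecidableEq C] [DecidableEq V]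

/-- All chain entries with index ≥ 1 lie on the same side (the side of p₂). -/
theorem chain_side {α β : List (C ⊕ V)} {h : V → List C} {p : Pos C V} (hreg : Regular α β)
    {p1 : Pos C V} {j1 : ℕ} (h1 : seqS α β h p 1 = some p1)
    (hj1 : IsOcc (α ++ β) p1.1 p1.2.1 j1) :
    ∀ {n : ℕ} {r : Pos C V} {jr : ℕ}, 1 ≤ n → seqS α β h p n = some r →
      IsOcc (α ++ β) r.1 r.2.1 jr → (jr < α.length ↔ j1 < α.length) := by
  intro n
  induction n with
  | zero => intro r jr hn; omega
  | succ t ih =>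
    intro r jr hn hs hjr
    cases t with
    | zero =>
      rw [h1] at hs
      cases hs
      rw [isOcc_unique hjr hj1]
    | succ m =>
      obtain ⟨q, x, hq, hx, hc2, hcorr⟩ := seqS_succ_elim hs
      obtain ⟨hvf, hvr, jf, jr', of, or', hside, heq⟩ := hcorr
      obtain ⟨jqq, jrq, q', oq, hvq, -⟩ := entry_occ (by omega : 1 ≤ m + 1) hq
      have hzq : 1 ≤ q.2.1 ∧ q.2.1 ≤ 2 := by
        obtain ⟨a, b, -, -⟩ := hvq
        rw [hx, hc2] at b
        exact ⟨a, b⟩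
      have zocc : IsOcc (α ++ β) (Sum.inr x) q.2.1 jrq := by rw [← hx]; exact oq
      have focc : IsOcc (α ++ β) (Sum.inr x) (flipz q.2.1) jf := by
        rw [← hx]; exact of
      have hz1 := z_side hreg hc2 zocc
      have hz2 := z_side hreg hc2 focc
      have ihq := ih (by omega) hq oq
      have hjr' : jr = jr' := isOcc_unique hjr or'
      subst hjr'
      rcases (by omega : q.2.1 = 1 ∨ q.2.1 = 2) with hzz | hzz <;>
        rw [hzz] at hz1 hz2 <;> simp [flipz] at hz1 hz2 <;> omega

end WEq

namespace WEq

variable {C V : Type} [DecidableEq C] [DecidableEq V]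

theorem surgery_eq {A : Type} {Sa Ea Sb Eb hx : List A} {Δ : ℕ}
    (heq : Sa ++ (hx ++ Ea) = Sb ++ (hx ++ Eb)) (hlen : Sa.length = Sb.length + Δ)
    (hΔ : Δ ≤ hx.length) :
    Sa ++ (hx.drop Δ ++ Ea) = Sb ++ (hx.drop Δ ++ Eb) := by
  have hSa : Sa = Sb ++ hx.take Δ := by
    have h1 := congrArg (List.take (Sb.length + Δ)) heq
    rw [← hlen] at h1
    rw [List.take_left] at h1
    rw [hlen] at h1
    rw [List.take_length_add_append] at h1
    rw [List.take_append_of_le_length hΔ] at h1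
    exact h1
  rw [hSa] at heq
  rw [List.append_assoc] at heq
  have heq2 : hx.take Δ ++ (hx ++ Ea) = hx ++ Eb := List.append_cancel_left heq
  have heq3 : hx ++ Ea = hx.drop Δ ++ Eb := by
    have h2 := congrArg (List.drop Δ) heq2
    rw [List.drop_left' (show (hx.take Δ).length = Δ by rw [List.length_take]; omega)] at h2
    rw [List.drop_append_of_le_length hΔ] at h2
    exact h2
  rw [hSa, List.append_assoc]
  rw [show hx.take Δ ++ (hx.drop Δ ++ Ea) = (hx.take Δ ++ hx.drop Δ) ++ Ea by
    rw [List.append_assoc]]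
  rw [List.take_append_drop, heq3]

theorem applySub_factor (h : V → List C) (γ : List (C ⊕ V)) {n : ℕ} {x : V}
    (hn : n < γ.length) (hx : γ[n] = Sum.inr x) :
    applySub h γ = applySub h (γ.take n) ++ (h x ++ applySub h (γ.drop (n+1))) := by
  conv_lhs => rw [← List.take_append_drop n γ]
  rw [applySub_append]
  congr 1
  rw [List.drop_eq_getElem_cons hn, hx]
  simp [applySub]

theorem applySub_congr {g h : V → List C} (γ : List (C ⊕ V))
    (hgh : ∀ y, Sum.inr y ∈ γ → g y = h y) : applySub g γ = applySub h γ := by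
  induction γ with
  | nil => rfl
  | cons a t ih =>
    have ht : ∀ y, Sum.inr y ∈ t → g y = h y := fun y hy => hgh y (List.mem_cons_of_mem a hy)
    cases a with
    | inl c => simp [applySub, ih ht]
    | inr y => simp [applySub, ih ht, hgh y List.mem_cons_self]

theorem notmem_take_drop {γ : List (C ⊕ V)} {x : V} {n : ℕ}
    (hc : γ.count (Sum.inr x) = 1) (hn : n < γ.length) (hx : γ[n] = Sum.inr x) :
    Sum.inr x ∉ γ.take n ∧ Sum.inr x ∉ γ.drop (n+1) := by
  have hsplit : γ.count (Sum.inr x) =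
      (γ.take n).count (Sum.inr x) + (γ.drop n).count (Sum.inr x) := by
    conv_lhs => rw [← List.take_append_drop n γ]
    rw [List.count_append]
  have hdrop : (γ.drop n).count (Sum.inr x) = (γ.drop (n+1)).count (Sum.inr x) + 1 := by
    rw [List.drop_eq_getElem_cons hn, hx, List.count_cons_self]
  constructor
  · rw [← List.count_eq_zero]; omega
  · rw [← List.count_eq_zero]; omega

theorem overlap_shorten {α β : List (C ⊕ V)} {h : V → List C}
    (hsol : applySub h α = applySub h β)
    (hmin : ∀ g : V → List C, applySub g α = applySub g β →
      (applySub h α).length ≤ (applySub g α).length)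
    {x : V} {nα nβ : ℕ} (hnα : nα < α.length) (hnβ : nβ < β.length)
    (gα : α[nα] = Sum.inr x) (gβ : β[nβ] = Sum.inr x)
    (hcα : α.count (Sum.inr x) = 1) (hcβ : β.count (Sum.inr x) = 1)
    {Δ : ℕ} (hΔ1 : 1 ≤ Δ) (hΔ2 : Δ ≤ (h x).length)
    (hoff : (applySub h (α.take nα)).length = (applySub h (β.take nβ)).length + Δ ∨
            (applySub h (β.take nβ)).length = (applySub h (α.take nα)).length + Δ) :
    False := by
  classical
  set g : V → List C := fun y => if y = x then (h x).drop Δ else h y with hg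
  have hgx : g x = (h x).drop Δ := by simp [hg]
  obtain ⟨hta, hda⟩ := notmem_take_drop hcα hnα gα
  obtain ⟨htb, hdb⟩ := notmem_take_drop hcβ hnβ gβ
  have congr_take_a : applySub g (α.take nα) = applySub h (α.take nα) :=
    applySub_congr _ (fun y hy => by
      have : y ≠ x := fun hyx => hta (hyx ▸ hy)
      simp [hg, this])
  have congr_drop_a : applySub g (α.drop (nα+1)) = applySub h (α.drop (nα+1)) :=
    applySub_congr _ (fun y hy => by
      have : y ≠ x := fun hyx => hda (hyx ▸ hy)
      simp [hg, this])
  have congr_take_b : applySub g (β.take nβ) = applySub h (β.take nβ) :=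
    applySub_congr _ (fun y hy => by
      have : y ≠ x := fun hyx => htb (hyx ▸ hy)
      simp [hg, this])
  have congr_drop_b : applySub g (β.drop (nβ+1)) = applySub h (β.drop (nβ+1)) :=
    applySub_congr _ (fun y hy => by
      have : y ≠ x := fun hyx => hdb (hyx ▸ hy)
      simp [hg, this])
  have hga : applySub g α = applySub h (α.take nα) ++
      ((h x).drop Δ ++ applySub h (α.drop (nα+1))) := by
    rw [applySub_factor g α hnα gα, congr_take_a, congr_drop_a, hgx]
  have hgb : applySub g β = applySub h (β.take nβ) ++
      ((h x).drop Δ ++ applySub h (β.drop (nβ+1))) := by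
    rw [applySub_factor g β hnβ gβ, congr_take_b, congr_drop_b, hgx]
  have hha : applySub h α = applySub h (α.take nα) ++
      (h x ++ applySub h (α.drop (nα+1))) := applySub_factor h α hnα gα
  have hhb : applySub h β = applySub h (β.take nβ) ++
      (h x ++ applySub h (β.drop (nβ+1))) := applySub_factor h β hnβ gβ
  have hsol' : applySub g α = applySub g β := by
    rw [hga, hgb]
    rcases hoff with ho | ho
    · exact surgery_eq (by rw [← hha, ← hhb]; exact hsol) (by omega) hΔ2
    · exact (surgery_eq (by rw [← hha, ← hhb]; exact hsol.symm) (by omega) hΔ2).symm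
  have hlen := hmin g hsol'
  rw [hha, hga] at hlen
  simp only [List.length_append, List.length_drop] at hlen
  omega
end WEq

namespace WEq

variable {C V : Type} [DecidableEq C] [DecidableEq V]

/-- The letter position (in the solution word, side-relative) of the chain entry
at index n. -/
def Tau (α β : List (C ⊕ V)) (h : V → List C) (p : Pos C V) (n τ : ℕ) : Prop :=
  ∃ (r : Pos C V) (jr : ℕ), seqS α β h p n = some r ∧ IsOcc (α ++ β) r.1 r.2.1 jr ∧
    offset h α β jr + r.2.2 = τ

theorem tau_unique {α β : List (C ⊕ V)} {h : V → List C} {p : Pos C V} {n τ τ' : ℕ}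
    (h1 : Tau α β h p n τ) (h2 : Tau α β h p n τ') : τ = τ' := by
  obtain ⟨r, jr, hs, ho, he⟩ := h1
  obtain ⟨r', jr', hs', ho', he'⟩ := h2
  rw [hs] at hs'
  cases Option.some.inj hs'
  rw [isOcc_unique ho ho'] at he
  omega

theorem tau_exists {α β : List (C ⊕ V)} {h : V → List C} {p : Pos C V} {n : ℕ} {r : Pos C V}
    (hn : 1 ≤ n) (hs : seqS α β h p n = some r) : ∃ τ, Tau α β h p n τ := by
  obtain ⟨jq, jr, q, or_, -, -⟩ := entry_occ hn hs
  exact ⟨offset h α β jr + r.2.2, r, jr, hs, or_, rfl⟩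

/-- One chain step is strictly monotone on letter positions. -/
theorem tau_step_lt {α β : List (C ⊕ V)} {h : V → List C} {p : Pos C V}
    (hro : RegularOrdered α β)
    {p1 : Pos C V} {j1 : ℕ} (h1 : seqS α β h p 1 = some p1)
    (hj1 : IsOcc (α ++ β) p1.1 p1.2.1 j1)
    {n m τn τm τn' τm' : ℕ} (hn : 1 ≤ n) (hm : 1 ≤ m)
    (tn : Tau α β h p n τn) (tm : Tau α β h p m τm)
    (tn' : Tau α β h p (n+1) τn') (tm' : Tau α β h p (m+1) τm')
    (hlt : τn < τm) : τn' < τm' := by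
  have hreg := hro.1
  -- unpack step n
  obtain ⟨r2n, jr2n, hs2n, ho2n, he2n⟩ := tn'
  obtain ⟨qn, xn, hqn, hxn, hcn, hcorrn⟩ := seqS_succ_elim
    (show seqS α β h p ((n-1)+2) = some r2n by
      rw [show n-1+2 = n+1 by omega]; exact hs2n)
  rw [show n-1+1 = n by omega] at hqn
  obtain ⟨hvfn, hvr2n, jAn, jn', oAn, on', hsn, heqn⟩ := hcorrn
  -- unpack step m
  obtain ⟨r2m, jr2m, hs2m, ho2m, he2m⟩ := tm'
  obtain ⟨qm, xm, hqm, hxm, hcm, hcorrm⟩ := seqS_succ_elim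
    (show seqS α β h p ((m-1)+2) = some r2m by
      rw [show m-1+2 = m+1 by omega]; exact hs2m)
  rw [show m-1+1 = m by omega] at hqm
  obtain ⟨hvfm, hvr2m, jAm, jm', oAm, om', hsm, heqm⟩ := hcorrm
  -- validities and occurrences for the entries
  obtain ⟨jdum1, jBn, qdum1, hoBn, hv1n, -⟩ := entry_occ hn hqn
  obtain ⟨jdum2, jBm, qdum2, hoBm, hv1m, -⟩ := entry_occ hm hqm
  have heBn : offset h α β jBn + qn.2.2 = τn :=
    tau_unique ⟨qn, jBn, hqn, hoBn, rfl⟩ tn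
  have heBm : offset h α β jBm + qm.2.2 = τm :=
    tau_unique ⟨qm, jBm, hqm, hoBm, rfl⟩ tm
  -- occurrences as occurrences of the variables
  have oBn : IsOcc (α ++ β) (Sum.inr xn) qn.2.1 jBn := by rw [← hxn]; exact hoBn
  have oAn' : IsOcc (α ++ β) (Sum.inr xn) (flipz qn.2.1) jAn := by rw [← hxn]; exact oAn
  have oBm : IsOcc (α ++ β) (Sum.inr xm) qm.2.1 jBm := by rw [← hxm]; exact hoBm
  have oAm' : IsOcc (α ++ β) (Sum.inr xm) (flipz qm.2.1) jAm := by rw [← hxm]; exact oAm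
  -- bounds
  have hzn : 1 ≤ qn.2.1 ∧ qn.2.1 ≤ 2 := by
    obtain ⟨a, b, -, -⟩ := hv1n; rw [hxn, hcn] at b; exact ⟨a, b⟩
  have hzm : 1 ≤ qm.2.1 ∧ qm.2.1 ≤ 2 := by
    obtain ⟨a, b, -, -⟩ := hv1m; rw [hxm, hcm] at b; exact ⟨a, b⟩
  have hdn : 1 ≤ qn.2.2 ∧ qn.2.2 ≤ (h xn).length := by
    obtain ⟨-, -, a, b⟩ := hv1n; rw [hxn] at b; exact ⟨a, b⟩
  have hdm : 1 ≤ qm.2.2 ∧ qm.2.2 ≤ (h xm).length := by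
    obtain ⟨-, -, a, b⟩ := hv1m; rw [hxm] at b; exact ⟨a, b⟩
  -- getElem facts
  obtain ⟨hjBn_lt, gBn⟩ := isOcc_index oBn
  obtain ⟨hjAn_lt, gAn⟩ := isOcc_index oAn'
  obtain ⟨hjBm_lt, gBm⟩ := isOcc_index oBm
  obtain ⟨hjAm_lt, gAm⟩ := isOcc_index oAm'
  -- entries same side
  have sxy : jBn < α.length ↔ jBm < α.length := by
    rw [chain_side hreg h1 hj1 hn hqn hoBn, chain_side hreg h1 hj1 hm hqm hoBm]
  -- flips on opposite sides
  have hz1n := z_side hreg hcn oBn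
  have hz2n := z_side hreg hcn oAn'
  have sxn : ¬ (jAn < α.length ↔ jBn < α.length) := by
    rcases (by omega : qn.2.1 = 1 ∨ qn.2.1 = 2) with hzz | hzz <;>
      rw [hzz] at hz1n hz2n <;> simp [flipz] at hz1n hz2n <;> omega
  have hz1m := z_side hreg hcm oBm
  have hz2m := z_side hreg hcm oAm'
  have sxm : ¬ (jAm < α.length ↔ jBm < α.length) := by
    rcases (by omega : qm.2.1 = 1 ∨ qm.2.1 = 2) with hzz | hzz <;>
      rw [hzz] at hz1m hz2m <;> simp [flipz] at hz1m hz2m <;> omega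
  -- the base inequality in offset form
  have hlt' : offset h α β jBn + qn.2.2 < offset h α β jBm + qm.2.2 := by omega
  have key := step_mono hro h hjBn_lt hjAn_lt hjBm_lt hjAm_lt gBn gAn gBm gAm
    sxy sxn sxm hdn.1 hdn.2 hdm.1 hdm.2 hlt'
  -- conclude via the correspondence equations
  have hjn' : jn' = jr2n := isOcc_unique on' ho2n
  have hjm' : jm' = jr2m := isOcc_unique om' ho2m
  subst hjn'; subst hjm'
  simp only at heqn heqm
  omega

end WEq

namespace WEq

variable {C V : Type} [DecidableEq C] [DecidableEq V]

/-- If the two occurrences of x have equal offsets, any position corresponding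
into x's block comes from an occurrence of x itself. -/
theorem entry_into_block {α β : List (C ⊕ V)} (h : V → List C) {x : V} {jA jB : ℕ}
    (hjA : jA < (α ++ β).length) (hjB : jB < (α ++ β).length)
    (gA : (α ++ β)[jA] = Sum.inr x) (gB : (α ++ β)[jB] = Sum.inr x)
    (sAB : ¬ (jA < α.length ↔ jB < α.length))
    (hΔ : offset h α β jA = offset h α β jB)
    {jf : ℕ} {df dm : ℕ} (hjf : jf < (α ++ β).length)
    (hdf1 : 1 ≤ df) (hdf2 : df ≤ (img h ((α ++ β)[jf])).length)
    (hdm1 : 1 ≤ dm) (hdm2 : dm ≤ (h x).length)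
    (heq : offset h α β jf + df = offset h α β jB + dm) :
    (α ++ β)[jf] = Sum.inr x := by
  by_cases hc : jA < α.length ↔ jf < α.length
  · have hdm2' : dm ≤ (img h ((α ++ β)[jA])).length := by rw [gA]; exact hdm2
    have hja : jf = jA := cover_uniq h hjf hjA hc.symm hdf1 hdf2 hdm1 hdm2'
      (by omega)
    subst hja; exact gA
  · have hcB : jB < α.length ↔ jf < α.length := by tauto
    have hdm2' : dm ≤ (img h ((α ++ β)[jB])).length := by rw [gB]; exact hdm2
    have hjb : jf = jB := cover_uniq h hjf hjB hcB.symm hdf1 hdf2 hdm1 hdm2'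
      heq
    subst hjb; exact gB

/-- Overlapping occurrences of a variable contradict minimality. -/
theorem occ_overlap_false {α β : List (C ⊕ V)} {h : V → List C}
    (hreg : Regular α β)
    (hsol : applySub h α = applySub h β)
    (hmin : ∀ g : V → List C, applySub g α = applySub g β →
      (applySub h α).length ≤ (applySub g α).length)
    {x : V} (hc2 : (α ++ β).count (Sum.inr x) = 2) {jA jB : ℕ}
    (hjA : jA < (α ++ β).length) (hjB : jB < (α ++ β).length)
    (gA : (α ++ β)[jA] = Sum.inr x) (gB : (α ++ β)[jB] = Sum.inr x)
    (sAB : ¬ (jA < α.length ↔ jB < α.length))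
    {Δ : ℕ} (hΔ1 : 1 ≤ Δ) (hΔ2 : Δ ≤ (h x).length)
    (hoffd : offset h α β jA = offset h α β jB + Δ ∨
             offset h α β jB = offset h α β jA + Δ) : False := by
  have hca : α.count (Sum.inr x) = 1 ∧ β.count (Sum.inr x) = 1 := by
    rw [List.count_append] at hc2
    have := hreg x
    omega
  have hlenA := hjA; rw [List.length_append] at hlenA
  have hlenB := hjB; rw [List.length_append] at hlenB
  by_cases hA : jA < α.length
  · have hB : ¬ jB < α.length := by tauto
    have gα : α[jA] = Sum.inr x := by rw [← getElem_left hA]; exact gA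
    have gβ : β[jB - α.length]'(by omega) = Sum.inr x := by
      rw [← getElem_right hB hjB]; exact gB
    refine overlap_shorten hsol hmin hA (show jB - α.length < β.length by omega)
      gα gβ hca.1 hca.2 hΔ1 hΔ2 ?_
    rw [offset_left h hA, offset_right h hB] at hoffd
    exact hoffd
  · have hB : jB < α.length := by tauto
    have gβ : β[jA - α.length]'(by omega) = Sum.inr x := by
      rw [← getElem_right hA hjA]; exact gA
    have gα : α[jB] = Sum.inr x := by rw [← getElem_left hB]; exact gB
    refine overlap_shorten hsol hmin hB (show jA - α.length < β.length by omega)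
      gα gβ hca.1 hca.2 hΔ1 hΔ2 ?_
    rw [offset_left h hB, offset_right h hA] at hoffd
    exact hoffd.symm

end WEq


/-!
STATEMENT 11: for a minimal solution h of a regular-ordered word equation α = β,
every sequence S_p (for p a position whose symbol is a constant or a variable
occurring only once in αβ) contains at most one position for each variable: it
cannot contain entries (x,z,d) and (x,z',d') with the same variable x at two
distinct indices of the sequence.
-/


open WEq in
theorem stmt11 (C V : Type) [DecidableEq C] [DecidableEq V]
    (α β : List (C ⊕ V)) (h : V → List C)
    (hro : RegularOrdered α β)
    (hsol : applySub h α = applySub h β)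
    (hmin : ∀ g : V → List C, applySub g α = applySub g β →
      (applySub h α).length ≤ (applySub g α).length)
    (p : Pos C V) (hp : SingleOrConst α β p.1) (hpv : ValidPos α β h p)
    (i j : ℕ) (hij : i < j) (x : V) (z d z' d' : ℕ)
    (hi : seqS α β h p i = some (Sum.inr x, z, d))
    (hj : seqS α β h p j = some (Sum.inr x, z', d')) :
    False := by
  classical
  have hreg := hro.1
  have hk1 : 1 ≤ j := by omega
  obtain ⟨p1, h1⟩ := seqS_some_mono hk1 hj
  have h1' : nextCorr α β h p = some p1 := by rw [← seqS_one]; exact h1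
  have hcorr1 : Corresponds α β h p p1 := nextCorr_some h1'
  obtain ⟨hvp, hvp1, jp, j1, op, o1, hside1, heq1⟩ := hcorr1
  rcases Nat.eq_zero_or_pos i with hi0 | hipos
  · -- i = 0 : the symbol of p is x, which then occurs once; side parity contradiction
    subst hi0
    have hpeq : p = (Sum.inr x, z, d) := Option.some.inj hi
    subst hpeq
    have hcount1 : (α ++ β).count (Sum.inr x) = 1 := by
      rcases hp with ⟨a, ha⟩ | hc
      · exact absurd ha (by simp)
      · exact hc
    obtain ⟨jq2, jrj, q2, orj, hvrj, -, -, -, -⟩ := entry_occ hk1 hj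
    have hz : z = 1 := by
      have a : 1 ≤ z := hvp.1
      have b : z ≤ (α ++ β).count (Sum.inr x) := hvp.2.1
      omega
    have hz' : z' = 1 := by
      have a : 1 ≤ z' := hvrj.1
      have b : z' ≤ (α ++ β).count (Sum.inr x) := hvrj.2.1
      omega
    have op' : IsOcc (α ++ β) (Sum.inr x) z jp := op
    have orj' : IsOcc (α ++ β) (Sum.inr x) z' jrj := orj
    rw [hz] at op'
    rw [hz'] at orj'
    have hjj : jp = jrj := isOcc_unique op' orj'
    have hcs := chain_side hreg h1 o1 hk1 hj orj
    omega
  · -- i ≥ 1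
    obtain ⟨ri1, hri1⟩ := seqS_some_mono (show i+1 ≤ j by omega) hj
    obtain ⟨qi, xi, hqi, hxi, hci, hcorri⟩ := seqS_succ_elim
      (show seqS α β h p ((i-1)+2) = some ri1 by
        rw [show i-1+2 = i+1 by omega]; exact hri1)
    rw [show i-1+1 = i by omega] at hqi
    have hq_eq : qi = (Sum.inr x, z, d) := by rw [hqi] at hi; exact Option.some.inj hi
    subst hq_eq
    have hh : Sum.inr x = Sum.inr xi := hxi
    injection hh with hh2
    subst hh2
    obtain ⟨hvfi, hvri1, jA, ji1, oA, oi1, hsideA, heqA⟩ := hcorri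
    have oA' : IsOcc (α ++ β) (Sum.inr x) (flipz z) jA := oA
    obtain ⟨jdum, jB, qdum, oB0, hvqi, -⟩ := entry_occ hipos hqi
    have oB : IsOcc (α ++ β) (Sum.inr x) z jB := oB0
    have hz12 : 1 ≤ z ∧ z ≤ 2 := by
      have a : 1 ≤ z := hvqi.1
      have b : z ≤ (α ++ β).count (Sum.inr x) := hvqi.2.1
      rw [hci] at b
      exact ⟨a, b⟩
    have hd1 : 1 ≤ d := hvqi.2.2.1
    have hd2 : d ≤ (h x).length := hvqi.2.2.2
    obtain ⟨hjB_lt, gB⟩ := isOcc_index oB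
    obtain ⟨hjA_lt, gA⟩ := isOcc_index oA'
    have hz1 := z_side hreg hci oB
    have hz2 := z_side hreg hci oA'
    have sAB : ¬ (jA < α.length ↔ jB < α.length) := by
      rcases (by omega : z = 1 ∨ z = 2) with hzz | hzz <;> rw [hzz] at hz1 hz2 <;>
        simp [flipz] at hz1 hz2 <;> omega
    obtain ⟨jqk, jk, qk, ok0, hvk, -⟩ := entry_occ (by omega : 1 ≤ j) hj
    have ok : IsOcc (α ++ β) (Sum.inr x) z' jk := ok0
    have hd1' : 1 ≤ d' := hvk.2.2.1
    have hd2' : d' ≤ (h x).length := hvk.2.2.2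
    obtain ⟨hjk_lt, gk⟩ := isOcc_index ok
    have sBk : jB < α.length ↔ jk < α.length := by
      rw [chain_side hreg h1 o1 hipos hqi oB0, chain_side hreg h1 o1 (by omega : 1 ≤ j) hj ok0]
    have hjkB : jk = jB := occ_same_side_unique hreg hjk_lt hjB_lt gk gB sBk.symm
    have heqA' : offset h α β jA + d = offset h α β ji1 + ri1.2.2 := heqA
    rcases lt_trichotomy (offset h α β jA) (offset h α β jB) with hΔ | hΔ | hΔ
    · -- decreasing case
      have tauI : Tau α β h p i (offset h α β jB + d) :=
        ⟨(Sum.inr x, z, d), jB, hqi, oB0, rfl⟩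
      have tauI1 : Tau α β h p (i+1) (offset h α β jA + d) :=
        ⟨ri1, ji1, hri1, oi1, by omega⟩
      have claim : ∀ t, i+1+t ≤ j →
          ∃ τ, Tau α β h p (i+1+t) τ ∧ τ ≤ offset h α β jA + d := by
        intro t
        induction t with
        | zero => intro ht; exact ⟨_, tauI1, le_refl _⟩
        | succ t ih =>
          intro ht
          obtain ⟨τ, tmτ, hτ⟩ := ih (by omega)
          obtain ⟨rm1, hrm1⟩ := seqS_some_mono (show i+1+t+1 ≤ j by omega) hj
          obtain ⟨τ', tmτ'⟩ := tau_exists (by omega : 1 ≤ i+1+t+1) hrm1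
          have hstep := tau_step_lt hro h1 o1 (by omega : 1 ≤ i+1+t) hipos tmτ tauI tmτ' tauI1
            (by omega : τ < offset h α β jB + d)
          exact ⟨τ', by rw [show i+1+(t+1) = i+1+t+1 by omega]; exact tmτ', by omega⟩
      obtain ⟨τj, tjτ, hτj⟩ := claim (j - (i+1)) (by omega)
      rw [show i+1+(j-(i+1)) = j by omega] at tjτ
      have tauJ : Tau α β h p j (offset h α β jB + d') :=
        ⟨(Sum.inr x, z', d'), jk, hj, ok0, by rw [hjkB]⟩
      have hττ := tau_unique tjτ tauJ
      exact occ_overlap_false hreg hsol hmin hci hjA_lt hjB_lt gA gB sAB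
        (show 1 ≤ offset h α β jB - offset h α β jA by omega)
        (show offset h α β jB - offset h α β jA ≤ (h x).length by omega)
        (Or.inr (by omega))
    · -- equal offsets : the chain can never enter the block of x
      have hQ : ∃ n : ℕ, 1 ≤ n ∧ ∃ rn : Pos C V,
          seqS α β h p n = some rn ∧ rn.1 = Sum.inr x :=
        ⟨i, hipos, (Sum.inr x, z, d), hqi, rfl⟩
      obtain ⟨hm1, rm, hrm, hrmx⟩ := Nat.find_spec hQ
      obtain ⟨jqm, jm, qm, om0, hvm, -⟩ := entry_occ hm1 hrm
      have om : IsOcc (α ++ β) (Sum.inr x) rm.2.1 jm := by rw [← hrmx]; exact om0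
      have hzm : 1 ≤ rm.2.1 ∧ rm.2.1 ≤ 2 := by
        have hb : rm.2.1 ≤ (α ++ β).count rm.1 := hvm.2.1
        rw [hrmx, hci] at hb
        exact ⟨hvm.1, hb⟩
      have hdm1 : 1 ≤ rm.2.2 := hvm.2.2.1
      have hdm2 : rm.2.2 ≤ (h x).length := by
        have hb := hvm.2.2.2
        rw [hrmx] at hb
        exact hb
      have hoff_m : offset h α β jm = offset h α β jB := by
        have hcase : rm.2.1 = z ∨ rm.2.1 = flipz z := by
          rcases (by omega : z = 1 ∨ z = 2) with hzz | hzz <;> rw [hzz] <;>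
            simp [flipz] <;> omega
        rcases hcase with he | he
        · rw [he] at om; rw [isOcc_unique om oB]
        · rw [he] at om; rw [isOcc_unique om oA']; omega
      rcases (by omega : Nat.find hQ = 1 ∨ 2 ≤ Nat.find hQ) with hm2 | hm2
      · -- the first x-entry is p₂ : p corresponds into x's block, so p.1 = x
        rw [hm2] at hrm
        have hrm1 : rm = p1 := by rw [h1] at hrm; exact (Option.some.inj hrm).symm
        subst hrm1
        have hj1m : j1 = jm := isOcc_unique o1 om0
        obtain ⟨hjp_lt, gp⟩ := isOcc_index op
        have hdp1 : 1 ≤ p.2.2 := hvp.2.2.1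
        have hdp2 : p.2.2 ≤ (img h ((α ++ β)[jp])).length := by rw [gp]; exact hvp.2.2.2
        have heq' : offset h α β jp + p.2.2 = offset h α β jB + rm.2.2 := by
          rw [heq1, hj1m, hoff_m]
        have hent := entry_into_block h hjA_lt hjB_lt gA gB sAB hΔ hjp_lt hdp1 hdp2
          hdm1 hdm2 heq'
        rw [gp] at hent
        rcases hp with ⟨a, ha⟩ | hc
        · rw [hent] at ha; exact absurd ha (by simp)
        · rw [hent] at hc; omega
      · -- the first x-entry comes from a previous entry whose flip is in x's block
        obtain ⟨qprev, y, hqprev, hy, hcy, hcorrp⟩ := seqS_succ_elim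
          (show seqS α β h p ((Nat.find hQ - 2)+2) = some rm by
            rw [show Nat.find hQ - 2 + 2 = Nat.find hQ by omega]; exact hrm)
        rw [show Nat.find hQ - 2 + 1 = Nat.find hQ - 1 by omega] at hqprev
        obtain ⟨hvfp, hvrm2, jf, jm2, ofp, om2, hsidep, heqp⟩ := hcorrp
        have hjm2 : jm2 = jm := isOcc_unique om2 om0
        obtain ⟨hjf_lt, gf⟩ := isOcc_index ofp
        have gf' : (α ++ β)[jf] = qprev.1 := gf
        have hdf1 : 1 ≤ qprev.2.2 := hvfp.2.2.1
        have hdf2 : qprev.2.2 ≤ (img h ((α ++ β)[jf])).length := by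
          rw [gf']; exact hvfp.2.2.2
        have heq' : offset h α β jf + qprev.2.2 = offset h α β jB + rm.2.2 := by
          have hq : offset h α β jf + qprev.2.2 = offset h α β jm2 + rm.2.2 := heqp
          rw [hjm2, hoff_m] at hq
          exact hq
        have hent := entry_into_block h hjA_lt hjB_lt gA gB sAB hΔ hjf_lt hdf1 hdf2
          hdm1 hdm2 heq'
        rw [gf'] at hent
        exact Nat.find_min hQ (show Nat.find hQ - 1 < Nat.find hQ by omega)
          ⟨by omega, qprev, hqprev, hent⟩
    · -- increasing case
      have tauI : Tau α β h p i (offset h α β jB + d) :=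
        ⟨(Sum.inr x, z, d), jB, hqi, oB0, rfl⟩
      have tauI1 : Tau α β h p (i+1) (offset h α β jA + d) :=
        ⟨ri1, ji1, hri1, oi1, by omega⟩
      have claim : ∀ t, i+1+t ≤ j →
          ∃ τ, Tau α β h p (i+1+t) τ ∧ offset h α β jA + d ≤ τ := by
        intro t
        induction t with
        | zero => intro ht; exact ⟨_, tauI1, le_refl _⟩
        | succ t ih =>
          intro ht
          obtain ⟨τ, tmτ, hτ⟩ := ih (by omega)
          obtain ⟨rm1, hrm1⟩ := seqS_some_mono (show i+1+t+1 ≤ j by omega) hj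
          obtain ⟨τ', tmτ'⟩ := tau_exists (by omega : 1 ≤ i+1+t+1) hrm1
          have hstep := tau_step_lt hro h1 o1 hipos (by omega : 1 ≤ i+1+t) tauI tmτ tauI1 tmτ'
            (by omega : offset h α β jB + d < τ)
          exact ⟨τ', by rw [show i+1+(t+1) = i+1+t+1 by omega]; exact tmτ', by omega⟩
      obtain ⟨τj, tjτ, hτj⟩ := claim (j - (i+1)) (by omega)
      rw [show i+1+(j-(i+1)) = j by omega] at tjτ
      have tauJ : Tau α β h p j (offset h α β jB + d') :=
        ⟨(Sum.inr x, z', d'), jk, hj, ok0, by rw [hjkB]⟩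
      have hττ := tau_unique tjτ tauJ
      exact occ_overlap_false hreg hsol hmin hci hjA_lt hjB_lt gA gB sAB
        (show 1 ≤ offset h α β jA - offset h α β jB by omega)
        (show offset h α β jA - offset h α β jB ≤ (h x).length by omega)
        (Or.inl (by omega))
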